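/- The K × N matrix A of Construction 1′ satisfies A A^H = K · I_K, where A^H is the conjugate transpose of A and I_K is the K × K identity matrix; that is, A is a tight frame with redundancy ρ = ‖A‖² = N/K = K. -/

import Mathlib

open Complex Finset

/-- The canonical additive character of a finite field `F` of characteristic `p`:
`χ(y) = exp(2πi · Tr(y) / p) = ω_p^{Tr(y)}`, where `Tr : F → F_p` is the field trace. -/
noncomputable def addChar (p : ℕ) {F : Type*} [Field F] [Fintype F] [Algebra (ZMod p) F]
    (y : F) : ℂ :=
  Complex.exp (2 * Real.pi * Complex.I * ((Algebra.trace (ZMod p) F y).val : ℂ) / p)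

/-- `b_i` associated to the digit `u_i`: `b = 0` if `u = 0`, and `b = α^(u-1)` if `u ≥ 1`. -/
noncomputable def bOf {F : Type*} [Field F] (α : F) (u : ℕ) : F :=
  if u = 0 then 0 else α ^ (u - 1)

section helpers
variable (p : ℕ) [Fact p.Prime] {F : Type*} [Field F] [Fintype F] [Algebra (ZMod p) F]

lemma exp_frac (v : ℕ) :
    Complex.exp (2 * Real.pi * Complex.I * ((v % p : ℕ) : ℂ) / p) =
    Complex.exp (2 * Real.pi * Complex.I * (v : ℂ) / p) := by
  have hp : (p : ℂ) ≠ 0 := Nat.cast_ne_zero.2 (Fact.out : p.Prime).ne_zero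
  have hv : (v : ℂ) = ((v % p : ℕ) : ℂ) + p * ((v / p : ℕ) : ℂ) := by
    rw [← Nat.cast_mul, ← Nat.cast_add, Nat.mod_add_div]
  rw [hv, mul_add, add_div, Complex.exp_add]
  have : 2 * Real.pi * Complex.I * ((p : ℂ) * ((v / p : ℕ) : ℂ)) / p
      = ((v / p : ℕ) : ℂ) * (2 * Real.pi * Complex.I) := by
    field_simp
  rw [this, Complex.exp_nat_mul_two_pi_mul_I]
  ring

lemma addChar_add (x y : F) : addChar p (x + y) = addChar p x * addChar p y := by
  have hp : NeZero p := ⟨(Fact.out : p.Prime).ne_zero⟩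
  unfold addChar
  rw [map_add, ZMod.val_add, exp_frac, ← Complex.exp_add]
  push_cast
  ring_nf

lemma addChar_zero : addChar p (0 : F) = 1 := by
  unfold addChar
  simp

lemma addChar_abs (y : F) : ‖addChar p y‖ = 1 := by
  unfold addChar
  rw [Complex.norm_exp]
  have : (2 * Real.pi * Complex.I * ((Algebra.trace (ZMod p) F y).val : ℂ) / p).re = 0 := by
    simp only [Complex.div_re, Complex.mul_re, Complex.mul_im, Complex.natCast_re,
      Complex.natCast_im, Complex.I_re, Complex.I_im, Complex.ofReal_re, Complex.ofReal_im,
      Complex.re_ofNat, Complex.im_ofNat]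
    ring
  rw [this, Real.exp_zero]

lemma addChar_ne_zero (y : F) : addChar p y ≠ 0 := Complex.exp_ne_zero _

lemma conj_addChar (y : F) : (starRingEnd ℂ) (addChar p y) = addChar p (-y) := by
  have h1 : addChar p y * addChar p (-y) = 1 := by
    rw [← addChar_add, add_neg_cancel, addChar_zero]
  have h2 : addChar p y * (starRingEnd ℂ) (addChar p y) = 1 := by
    rw [Complex.mul_conj]
    norm_cast
    rw [← Complex.sq_norm, addChar_abs, one_pow]
  exact mul_left_cancel₀ (addChar_ne_zero p y) (h2.trans h1.symm)

lemma sum_addChar (c : F) (hc : c ≠ 0) : ∑ y : F, addChar p (y * c) = 0 := by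
  have hre : ∑ y : F, addChar p (y * c) = ∑ y : F, addChar p y :=
    Fintype.sum_bijective (fun y : F => y * c)
      (mulRight_bijective₀ c hc) _ _ (fun y => rfl)
  rw [hre]
  have : FiniteDimensional (ZMod p) F := Module.Finite.of_finite
  have hnd := traceForm_nondegenerate (ZMod p) F
  have hz : ∃ z : F, Algebra.trace (ZMod p) F z ≠ 0 := by
    by_contra hf
    push_neg at hf
    have := hnd.1 1 (fun y => by simpa [Algebra.traceForm_apply] using hf y)
    exact one_ne_zero this
  obtain ⟨z, hz⟩ := hz
  have hχz : addChar p z ≠ 1 := by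
    unfold addChar
    intro h
    rw [Complex.exp_eq_one_iff] at h
    obtain ⟨n, hn⟩ := h
    have hp : (p : ℂ) ≠ 0 := Nat.cast_ne_zero.2 (Fact.out : p.Prime).ne_zero
    have h2pi : (2 * Real.pi * Complex.I : ℂ) ≠ 0 := by
      simp [Real.pi_ne_zero, Complex.I_ne_zero]
    have hpN : NeZero p := ⟨(Fact.out : p.Prime).ne_zero⟩
    set t : ℕ := (Algebra.trace (ZMod p) F z).val with ht
    have hteq : (t : ℂ) = n * p := by
      have h1 : (2 * Real.pi * Complex.I) * ((t : ℂ) / p) = (2 * Real.pi * Complex.I) * n := by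
        linear_combination hn
      have h2 := mul_left_cancel₀ h2pi h1
      field_simp at h2
      linear_combination h2
    have htz : (t : ℤ) = n * p := by exact_mod_cast hteq
    have hdvd : p ∣ t := by
      have : (p : ℤ) ∣ (t : ℤ) := ⟨n, by linarith [htz]⟩
      exact_mod_cast this
    have hlt : t < p := ZMod.val_lt _
    have ht0 : t ≠ 0 := fun h => hz ((ZMod.val_eq_zero _).1 h)
    exact ht0 (Nat.eq_zero_of_dvd_of_lt hdvd hlt)
  have key : addChar p z * (∑ y : F, addChar p y) = ∑ y : F, addChar p y := by
    rw [Finset.mul_sum]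
    exact Fintype.sum_bijective (fun y : F => z + y)
      (Equiv.addLeft z).bijective _ _ (fun y => (addChar_add p z y).symm)
  have := sub_eq_zero.2 key
  rw [← sub_one_mul] at this
  rcases mul_eq_zero.1 this with h | h
  · exact absurd (sub_eq_zero.1 h) hχz
  · exact h

end helpers

open scoped Matrix.Norms.L2Operator in
/-- The Construction 1′ matrix satisfies `A Aᴴ = K·I_K`: it is a tight frame with
redundancy `ρ = ‖A‖² = N/K = K`. -/
theorem construction1prime_tight_frame
    (p m : ℕ) [Fact p.Prime] (hodd : Odd p) (hm : 0 < m)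
    (K N : ℕ) (hK : K = p ^ m) (hN : N = K ^ 2)
    (F : Type*) [Field F] [Fintype F] [Algebra (ZMod p) F]
    (hcard : Fintype.card F = p ^ m)
    (α : F) (hα : ∀ x : F, x ≠ 0 → ∃ j : ℕ, α ^ j = x)
    (A : Matrix (Fin K) (Fin N) ℂ)
    (hA : ∀ (k : Fin K) (n : Fin N), A k n =
      if (k : ℕ) = 0 then ((Real.sqrt K : ℂ))⁻¹
      else ((Real.sqrt K : ℂ))⁻¹ * addChar p (bOf α ((n : ℕ) % K) * α ^ ((k : ℕ) - 1) +
        bOf α ((n : ℕ) / K) * α ^ (2 * ((k : ℕ) - 1))))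
    :
    A * A.conjTranspose = (K : ℂ) • (1 : Matrix (Fin K) (Fin K) ℂ) ∧
      ‖A‖ ^ 2 = (K : ℝ) := by
  classical
  have hprime : p.Prime := Fact.out
  have hp3 : 3 ≤ p := by
    have h2 := hprime.two_le
    have hne : p ≠ 2 := by
      intro h
      rw [h] at hodd
      exact (by decide : ¬ Odd 2) hodd
    omega
  have hK3 : 3 ≤ K := by
    rw [hK]
    calc 3 ≤ p := hp3
    _ = p ^ 1 := (pow_one p).symm
    _ ≤ p ^ m := Nat.pow_le_pow_right (by omega) hm
  have hK0 : 0 < K := by omega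
  -- α ≠ 0
  have hα0 : α ≠ 0 := by
    intro h
    have hsub : (Finset.univ : Finset F) ⊆ {0, 1} := by
      intro x _
      rcases eq_or_ne x 0 with h0 | h0
      · simp [h0]
      · obtain ⟨j, hj⟩ := hα x h0
        subst h
        rcases Nat.eq_zero_or_pos j with rfl | hj0
        · simp only [pow_zero] at hj
          simp [← hj]
        · rw [zero_pow hj0.ne'] at hj
          exact absurd hj.symm h0
    have hle := Finset.card_le_card hsub
    have h2 : ({0, 1} : Finset F).card ≤ 2 := Finset.card_insert_le _ _ |>.trans (by simp)
    rw [Finset.card_univ, hcard] at hle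
    have : 3 ≤ p ^ m := by rw [← hK]; omega
    omega
  set αu : Fˣ := Units.mk0 α hα0 with hαu
  have hval : ∀ j : ℕ, ((αu ^ j : Fˣ) : F) = α ^ j := fun j => by
    rw [Units.val_pow_eq_pow_val]; rfl
  have hord : K - 1 ≤ orderOf αu := by
    have hpos : 0 < orderOf αu := orderOf_pos αu
    have hsurj : Function.Surjective (fun i : Fin (orderOf αu) => αu ^ (i : ℕ)) := by
      intro v
      obtain ⟨j, hj⟩ := hα (v : F) (Units.ne_zero v)
      refine ⟨⟨j % orderOf αu, Nat.mod_lt _ hpos⟩, ?_⟩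
      apply Units.ext
      show ((αu ^ (j % orderOf αu) : Fˣ) : F) = (v : F)
      rw [pow_mod_orderOf, hval, hj]
    have hcle := Fintype.card_le_of_surjective _ hsurj
    rw [Fintype.card_fin] at hcle
    have hcu : Fintype.card Fˣ = K - 1 := by rw [Fintype.card_units, hcard, hK]
    omega
  set g : Fin K → F := fun u => bOf α (u : ℕ) with hg
  have hginj : Function.Injective g := by
    intro u u' h
    simp only [hg, bOf] at h
    apply Fin.ext
    by_cases h1 : (u : ℕ) = 0 <;> by_cases h2 : (u' : ℕ) = 0
    · omega
    · rw [if_pos h1, if_neg h2] at h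
      exact absurd h.symm (pow_ne_zero _ hα0)
    · rw [if_neg h1, if_pos h2] at h
      exact absurd h (pow_ne_zero _ hα0)
    · rw [if_neg h1, if_neg h2] at h
      have hu : αu ^ ((u : ℕ) - 1) = αu ^ ((u' : ℕ) - 1) :=
        Units.ext (by rw [hval, hval]; exact h)
      have hm1 : (u : ℕ) - 1 < orderOf αu := by
        have := u.isLt; omega
      have hm2 : (u' : ℕ) - 1 < orderOf αu := by
        have := u'.isLt; omega
      have := pow_injOn_Iio_orderOf hm1 hm2 hu
      omega
  have hgbij : Function.Bijective g := by
    rw [Fintype.bijective_iff_injective_and_card]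
    exact ⟨hginj, by rw [Fintype.card_fin, hcard, hK]⟩
  -- uniform entry formula
  have hApt : ∀ (k : Fin K) (n : Fin N), A k n
      = ((Real.sqrt K : ℂ))⁻¹ *
        addChar p (bOf α ((n : ℕ) % K) * g k + bOf α ((n : ℕ) / K) * (g k) ^ 2) := by
    intro k n
    rw [hA]
    by_cases hk : (k : ℕ) = 0
    · rw [if_pos hk]
      have : g k = 0 := by simp [hg, bOf, hk]
      rw [this]
      simp [addChar_zero]
    · rw [if_neg hk]
      have hgk : g k = α ^ ((k : ℕ) - 1) := by simp [hg, bOf, hk]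
      rw [hgk, ← pow_mul, mul_comm ((k : ℕ) - 1) 2]
  -- product of entries
  have hKs : ((Real.sqrt K : ℂ))⁻¹ * ((Real.sqrt K : ℂ))⁻¹ = (K : ℂ)⁻¹ := by
    rw [← mul_inv, ← Complex.ofReal_mul, Real.mul_self_sqrt (Nat.cast_nonneg K),
      Complex.ofReal_natCast]
  have hprod : ∀ (k k' : Fin K) (n : Fin N),
      A k n * (starRingEnd ℂ) (A k' n) =
      (K : ℂ)⁻¹ * (addChar p (bOf α ((n : ℕ) % K) * (g k - g k')) *
        addChar p (bOf α ((n : ℕ) / K) * ((g k) ^ 2 - (g k') ^ 2))) := by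
    intro k k' n
    rw [hApt, hApt, map_mul, conj_addChar, map_inv₀, Complex.conj_ofReal]
    rw [show ((Real.sqrt K : ℂ))⁻¹ * addChar p (bOf α ((n : ℕ) % K) * g k +
        bOf α ((n : ℕ) / K) * g k ^ 2) * (((Real.sqrt K : ℂ))⁻¹ *
        addChar p (-(bOf α ((n : ℕ) % K) * g k' + bOf α ((n : ℕ) / K) * g k' ^ 2))) =
        (((Real.sqrt K : ℂ))⁻¹ * ((Real.sqrt K : ℂ))⁻¹) *
        (addChar p (bOf α ((n : ℕ) % K) * g k + bOf α ((n : ℕ) / K) * g k ^ 2) *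
        addChar p (-(bOf α ((n : ℕ) % K) * g k' + bOf α ((n : ℕ) / K) * g k' ^ 2))) from by ring]
    rw [hKs, ← addChar_add, ← addChar_add]
    congr 2
    ring
  have h1 : A * A.conjTranspose = (K : ℂ) • (1 : Matrix (Fin K) (Fin K) ℂ) := by
    ext k k'
    rw [Matrix.mul_apply]
    simp only [Matrix.conjTranspose_apply, RCLike.star_def]
    -- reindex Fin N by pairs
    have hφlt : ∀ uv : Fin K × Fin K, (uv.1 : ℕ) + (uv.2 : ℕ) * K < N := by
      intro uv
      have h2' : (uv.2 : ℕ) * K ≤ (K - 1) * K :=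
        Nat.mul_le_mul_right K (by have := uv.2.isLt; omega)
      have hsum : K + (K - 1) * K = K * K := by
        have h1 : 1 + (K - 1) = K := by omega
        calc K + (K - 1) * K = (1 + (K - 1)) * K := by ring
        _ = K * K := by rw [h1]
      calc (uv.1 : ℕ) + (uv.2 : ℕ) * K < K + (K - 1) * K :=
            Nat.add_lt_add_of_lt_of_le uv.1.isLt h2'
      _ = K * K := hsum
      _ = N := by rw [hN]; ring
    set φ : Fin K × Fin K → Fin N := fun uv => ⟨(uv.1 : ℕ) + (uv.2 : ℕ) * K, hφlt uv⟩ with hφ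
    have hφmod : ∀ uv : Fin K × Fin K, ((φ uv : ℕ)) % K = (uv.1 : ℕ) := by
      intro uv
      show ((uv.1 : ℕ) + (uv.2 : ℕ) * K) % K = (uv.1 : ℕ)
      rw [Nat.add_mul_mod_self_right, Nat.mod_eq_of_lt uv.1.isLt]
    have hφdiv : ∀ uv : Fin K × Fin K, ((φ uv : ℕ)) / K = (uv.2 : ℕ) := by
      intro uv
      show ((uv.1 : ℕ) + (uv.2 : ℕ) * K) / K = (uv.2 : ℕ)
      rw [Nat.add_mul_div_right _ _ hK0, Nat.div_eq_of_lt uv.1.isLt, zero_add]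
    have hφbij : Function.Bijective φ := by
      rw [Fintype.bijective_iff_injective_and_card]
      constructor
      · intro uv uv' h
        have h1 : (uv.1 : ℕ) = (uv'.1 : ℕ) := by
          rw [← hφmod uv, ← hφmod uv', h]
        have h2 : (uv.2 : ℕ) = (uv'.2 : ℕ) := by
          rw [← hφdiv uv, ← hφdiv uv', h]
        exact Prod.ext (Fin.ext h1) (Fin.ext h2)
      · simp [hN, Fintype.card_prod, sq]
    have hre : ∑ n : Fin N, A k n * (starRingEnd ℂ) (A k' n)
        = ∑ uv : Fin K × Fin K, (K : ℂ)⁻¹ * (addChar p (g uv.1 * (g k - g k')) *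
            addChar p (g uv.2 * ((g k) ^ 2 - (g k') ^ 2))) := by
      refine (Fintype.sum_bijective φ hφbij _ _ ?_).symm
      intro uv
      rw [hprod, hφmod, hφdiv]
    rw [hre]
    rw [← Finset.mul_sum, Fintype.sum_prod_type]
    have hfact : ∑ u1 : Fin K, ∑ u2 : Fin K,
        addChar p (g u1 * (g k - g k')) * addChar p (g u2 * ((g k) ^ 2 - (g k') ^ 2))
        = (∑ u1 : Fin K, addChar p (g u1 * (g k - g k'))) *
          (∑ u2 : Fin K, addChar p (g u2 * ((g k) ^ 2 - (g k') ^ 2))) := by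
      rw [Finset.sum_mul_sum]
    rw [hfact]
    have hKc : ((Fintype.card F : ℕ) : ℂ) = (K : ℂ) := by rw [hcard, hK]
    by_cases hkk : k = k'
    · subst hkk
      simp only [sub_self, mul_zero, addChar_zero]
      rw [Finset.sum_const, Finset.card_univ, Fintype.card_fin]
      simp only [nsmul_eq_mul, mul_one]
      rw [Matrix.smul_apply, Matrix.one_apply_eq, smul_eq_mul, mul_one]
      have hKne : (K : ℂ) ≠ 0 := Nat.cast_ne_zero.2 hK0.ne'
      field_simp
    · have hd1 : g k - g k' ≠ 0 := sub_ne_zero.2 (fun h => hkk (hginj h))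
      have hz1 : ∑ u1 : Fin K, addChar p (g u1 * (g k - g k')) = 0 := by
        rw [Fintype.sum_bijective g hgbij _ (fun b => addChar p (b * (g k - g k')))
          (fun u => rfl)]
        exact sum_addChar p _ hd1
      rw [hz1, zero_mul, mul_zero]
      rw [Matrix.smul_apply, Matrix.one_apply_ne hkk, smul_eq_mul, mul_zero]
  refine ⟨h1, ?_⟩
  have h2 : ‖A‖ * ‖A‖ = (K : ℝ) := by
    have := Matrix.l2_opNorm_conjTranspose_mul_self (A.conjTranspose)
    rw [Matrix.conjTranspose_conjTranspose, Matrix.l2_opNorm_conjTranspose] at this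
    rw [← this, h1, norm_smul]
    have hnorm1 : ‖(1 : Matrix (Fin K) (Fin K) ℂ)‖ = 1 := by
      have : Nonempty (Fin K) := ⟨⟨0, hK0⟩⟩
      rw [Matrix.cstar_norm_def, map_one]
      exact norm_one
    rw [hnorm1, mul_one]
    simp
  rw [sq, h2]
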